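/- arXiv:cond-mat/0107549 — 2 statements merged into one kernel-verified Lean document; each statement's English description precedes it below -/
import Mathlib

section
/- Discrete-time valuation of a European mirror option with monotone increasing payoff: with q*₊(0) = ν(x*_T, 0) and the backward recursion q*₊((n+1)ε) = max over mirroring/no-mirroring at time T-(n+1)ε of the Gaussian expectation (with drift (α - σ²/2)ε and variance σ²ε) of q*₊(nε), one has for every n ≥ 0: q*₊(nε) = ν( x*_{T-nε} + (σ²/2 + |α - σ²/2|)·nε , σ²·nε ). -/
open MeasureTheory

/-- Gaussian smoothing of the payoff `f` in log-coordinates, extended to variance `0`. -/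
noncomputable def nu (f : ℝ → ℝ) (z s : ℝ) : ℝ :=
  if s = 0 then f (Real.exp z)
  else (Real.sqrt (2 * Real.pi * s))⁻¹ *
    ∫ x : ℝ, f (Real.exp x) * Real.exp (-(x - z + s/2)^2 / (2*s))

lemma gauss_int {s : ℝ} (hs : 0 < s) (c : ℝ) :
    ∫ u : ℝ, Real.exp (-(u - c)^2 / (2*s)) = Real.sqrt (2*Real.pi*s) := by
  have h : (fun u : ℝ => Real.exp (-(u - c)^2 / (2*s)))
      = fun u => (fun v : ℝ => Real.exp (-(1/(2*s)) * v^2)) (u - c) := by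
    funext u; congr 1; field_simp
  rw [h]
  rw [integral_sub_right_eq_self (fun v : ℝ => Real.exp (-(1/(2*s)) * v^2)) c,
    integral_gaussian]
  congr 1
  field_simp

lemma kernel_int {s : ℝ} (hs : 0 < s) (c : ℝ) :
    Integrable (fun u : ℝ => Real.exp (-(u - c)^2 / (2*s))) := by
  have hb : 0 < 1/(2*s) := by positivity
  have h := (integrable_exp_neg_mul_sq hb).comp_sub_right c
  have he : (fun u : ℝ => Real.exp (-(1/(2*s)) * (u - c)^2))
      = fun u : ℝ => Real.exp (-(u - c)^2 / (2*s)) := by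
    funext u; congr 1; field_simp
  exact he ▸ h

lemma key_ident {A B : ℝ} (hA : 0 < A) (hB : 0 < B) (a m x u : ℝ) :
    Real.exp (-(x - (a+u))^2/(2*A)) * Real.exp (-(u-m)^2/(2*B))
      = Real.exp (-(x - (a+m))^2/(2*(A+B))) *
        Real.exp (-(u - (m + B*(x-a-m)/(A+B)))^2/(2*(A*B/(A+B)))) := by
  rw [← Real.exp_add, ← Real.exp_add]
  congr 1
  have h1 : A ≠ 0 := hA.ne'
  have h2 : B ≠ 0 := hB.ne'
  have h3 : A + B ≠ 0 := by positivity
  field_simp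
  ring

lemma conv (g : ℝ → ℝ)
    (hg : ∀ c s : ℝ, 0 < s → Integrable (fun x : ℝ => g x * Real.exp (-(x - c)^2/(2*s))))
    (a m A B : ℝ) (hA : 0 < A) (hB : 0 < B) :
    ∫ u : ℝ, (∫ x : ℝ, g x * Real.exp (-(x - (a+u))^2/(2*A))) * Real.exp (-(u-m)^2/(2*B))
      = Real.sqrt (2*Real.pi*(A*B/(A+B))) *
        ∫ x : ℝ, g x * Real.exp (-(x - (a+m))^2/(2*(A+B))) := by
  have hAB : 0 < A + B := by linarith
  have hC : 0 < A*B/(A+B) := by positivity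
  set C := A*B/(A+B) with hCdef
  set F : ℝ → ℝ → ℝ := fun x u =>
    g x * (Real.exp (-(x - (a+u))^2/(2*A)) * Real.exp (-(u-m)^2/(2*B))) with hF
  set μfn : ℝ → ℝ := fun x => m + B*(x-a-m)/(A+B) with hμ
  -- measurability of g
  have gsm : AEStronglyMeasurable g volume := by
    have h1 := (hg 0 1 one_pos).aestronglyMeasurable
    have h2 : Continuous fun x : ℝ => (Real.exp (-(x - 0)^2/(2*1)))⁻¹ :=
      Continuous.inv₀ (by fun_prop) (fun x => Real.exp_ne_zero _)
    refine (h1.mul h2.aestronglyMeasurable).congr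
      (Filter.Eventually.of_forall fun x => ?_)
    show g x * _ * _ = g x
    rw [mul_assoc, mul_inv_cancel₀ (Real.exp_ne_zero _), mul_one]
  -- measurability of uncurried F
  have meas : AEStronglyMeasurable (Function.uncurry F) (volume.prod volume) := by
    apply AEStronglyMeasurable.mul gsm.comp_fst
    exact (Continuous.aestronglyMeasurable (by fun_prop))
  -- integrability of uncurried F
  have hFint : Integrable (Function.uncurry F) (volume.prod volume) := by
    rw [integrable_prod_iff meas]
    constructor
    · refine Filter.Eventually.of_forall fun x => ?_
      have h := (kernel_int hC (μfn x)).const_mul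
        (g x * Real.exp (-(x - (a+m))^2/(2*(A+B))))
      refine h.congr (Filter.Eventually.of_forall fun u => ?_)
      simp only [Function.uncurry_apply_pair, hF]
      rw [key_ident hA hB a m x u, mul_assoc]
    · have heq : (fun x => ∫ u : ℝ, ‖F x u‖)
          = fun x => ‖g x * Real.exp (-(x - (a+m))^2/(2*(A+B)))‖ * Real.sqrt (2*Real.pi*C) := by
        funext x
        have h1 : (fun u : ℝ => ‖F x u‖)
            = fun u => ‖g x * Real.exp (-(x - (a+m))^2/(2*(A+B)))‖ *
                Real.exp (-(u - μfn x)^2/(2*C)) := by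
          funext u
          simp only [hF]
          rw [key_ident hA hB a m x u, Real.norm_eq_abs, ← mul_assoc, abs_mul,
            abs_of_pos (Real.exp_pos _), Real.norm_eq_abs, abs_mul,
            abs_of_pos (Real.exp_pos _)]
        rw [h1, integral_const_mul, gauss_int hC]
      simp only [Function.uncurry_apply_pair]
      rw [heq]
      exact ((hg (a+m) (A+B) hAB).norm.mul_const _)
  -- swap integrals
  have hswap := (integral_integral_swap hFint).symm
  have hL : (∫ u : ℝ, (∫ x : ℝ, g x * Real.exp (-(x - (a+u))^2/(2*A)))
        * Real.exp (-(u-m)^2/(2*B))) = ∫ u : ℝ, ∫ x : ℝ, F x u := by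
    congr 1; funext u
    rw [← integral_mul_const]
    congr 1; funext x
    simp only [hF]; ring
  rw [hL, hswap]
  have hinner : ∀ x : ℝ, (∫ u : ℝ, F x u)
      = (g x * Real.exp (-(x - (a+m))^2/(2*(A+B)))) * Real.sqrt (2*Real.pi*C) := by
    intro x
    have h1 : (fun u : ℝ => F x u)
        = fun u => (g x * Real.exp (-(x - (a+m))^2/(2*(A+B)))) *
            Real.exp (-(u - μfn x)^2/(2*C)) := by
      funext u
      simp only [hF]
      rw [key_ident hA hB a m x u, mul_assoc]
    rw [h1, integral_const_mul, gauss_int hC]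
  simp only [hinner]
  rw [integral_mul_const, mul_comm]

lemma hg_of_hint (f : ℝ → ℝ)
    (hint : ∀ z s : ℝ, 0 < s →
      Integrable (fun x : ℝ => f (Real.exp x) * Real.exp (-(x - z + s/2)^2 / (2*s)))) :
    ∀ c s : ℝ, 0 < s →
      Integrable (fun x : ℝ => f (Real.exp x) * Real.exp (-(x - c)^2/(2*s))) := by
  intro c s hs
  have h := hint (c + s/2) s hs
  refine h.congr (Filter.Eventually.of_forall fun x => ?_)
  congr 2
  ring

/-- monotonicity of `nu` in its first argument -/

lemma nu_mono (f : ℝ → ℝ) (hmono : MonotoneOn f (Set.Ioi 0))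
    (hint : ∀ z s : ℝ, 0 < s →
      Integrable (fun x : ℝ => f (Real.exp x) * Real.exp (-(x - z + s/2)^2 / (2*s))))
    {s : ℝ} (hs : 0 ≤ s) {z₁ z₂ : ℝ} (h : z₁ ≤ z₂) : nu f z₁ s ≤ nu f z₂ s := by
  rcases eq_or_lt_of_le hs with hs0 | hs0
  · simp only [nu, ← hs0, if_pos rfl]
    exact hmono (Set.mem_Ioi.2 (Real.exp_pos _)) (Set.mem_Ioi.2 (Real.exp_pos _))
      (Real.exp_le_exp.2 h)
  · simp only [nu, if_neg hs0.ne']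
    refine mul_le_mul_of_nonneg_left ?_ (by positivity)
    have hshift : (∫ x : ℝ, f (Real.exp x) * Real.exp (-(x - z₂ + s/2)^2 / (2*s)))
        = ∫ x : ℝ, f (Real.exp (x + (z₂ - z₁))) * Real.exp (-(x - z₁ + s/2)^2 / (2*s)) := by
      rw [← integral_add_right_eq_self
        (fun x : ℝ => f (Real.exp x) * Real.exp (-(x - z₂ + s/2)^2 / (2*s))) (z₂ - z₁)]
      congr 1; funext x
      congr 2
      ring
    rw [hshift]
    refine integral_mono (hint z₁ s hs0) ?_ ?_
    · have h2 := (hint z₂ s hs0).comp_add_right (z₂ - z₁)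
      refine h2.congr (Filter.Eventually.of_forall fun x => ?_)
      congr 2
      ring
    · intro x
      have hle : f (Real.exp x) ≤ f (Real.exp (x + (z₂ - z₁))) :=
        hmono (Set.mem_Ioi.2 (Real.exp_pos _)) (Set.mem_Ioi.2 (Real.exp_pos _))
          (Real.exp_le_exp.2 (by linarith))
      exact mul_le_mul_of_nonneg_right hle (Real.exp_pos _).le

/-- semigroup step -/

lemma nu_step (f : ℝ → ℝ)
    (hint : ∀ z s : ℝ, 0 < s →
      Integrable (fun x : ℝ => f (Real.exp x) * Real.exp (-(x - z + s/2)^2 / (2*s))))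
    (z m S T : ℝ) (hS : 0 ≤ S) (hT : 0 < T) :
    (Real.sqrt (2*Real.pi*T))⁻¹ *
        ∫ u : ℝ, nu f (z + u) S * Real.exp (-(u - m)^2 / (2*T))
      = nu f (z + m + T/2) (S + T) := by
  have hg := hg_of_hint f hint
  have hST : 0 < S + T := by linarith
  rcases eq_or_lt_of_le hS with hS0 | hS0
  · -- S = 0
    subst hS0
    simp only [nu, if_pos rfl, if_true, eq_self_iff_true, zero_add, if_neg hT.ne']
    congr 1
    rw [← integral_add_right_eq_self
      (fun x : ℝ => f (Real.exp x) * Real.exp (-(x - (z + m + T/2) + T/2)^2 / (2*T))) z]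
    have he : (fun u : ℝ => f (Real.exp (z + u)) * Real.exp (-(u - m)^2 / (2*T)))
        = fun u : ℝ => f (Real.exp (u + z)) * Real.exp (-(u + z - (z + m + T/2) + T/2)^2 / (2*T)) := by
      funext u; ring_nf
    rw [he]
  · -- S > 0
    simp only [nu, if_neg hS0.ne', if_neg hST.ne']
    have hL : (fun u : ℝ => ((Real.sqrt (2*Real.pi*S))⁻¹ *
          ∫ x : ℝ, f (Real.exp x) * Real.exp (-(x - (z + u) + S/2)^2 / (2*S))) *
          Real.exp (-(u - m)^2 / (2*T)))
        = fun u : ℝ => (Real.sqrt (2*Real.pi*S))⁻¹ *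
          ((∫ x : ℝ, f (Real.exp x) * Real.exp (-(x - ((z - S/2) + u))^2 / (2*S))) *
            Real.exp (-(u - m)^2 / (2*T))) := by
      funext u
      have h2 : (fun x : ℝ => f (Real.exp x) * Real.exp (-(x - (z + u) + S/2)^2 / (2*S)))
          = fun x : ℝ => f (Real.exp x) * Real.exp (-(x - ((z - S/2) + u))^2 / (2*S)) := by
        funext x; ring_nf
      rw [h2]
      ring
    rw [hL, integral_const_mul, conv (fun x => f (Real.exp x)) hg (z - S/2) m S T hS0 hT]
    rw [← mul_assoc, ← mul_assoc]
    have hconst : (Real.sqrt (2*Real.pi*T))⁻¹ * (Real.sqrt (2*Real.pi*S))⁻¹ *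
        Real.sqrt (2*Real.pi*(S*T/(S+T))) = (Real.sqrt (2*Real.pi*(S+T)))⁻¹ := by
      have h1 : (2*Real.pi*T*(2*Real.pi*S))⁻¹ * (2*Real.pi*(S*T/(S+T)))
          = (2*Real.pi*(S+T))⁻¹ := by
        have hπ := Real.pi_ne_zero
        have h2 : S ≠ 0 := hS0.ne'
        have h3 : T ≠ 0 := hT.ne'
        have h4 : S + T ≠ 0 := hST.ne'
        field_simp
      rw [← mul_inv, ← Real.sqrt_mul (by positivity), ← Real.sqrt_inv,
        ← Real.sqrt_mul (by positivity), h1, Real.sqrt_inv]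
    rw [hconst]
    congr 1
    have h3 : (fun x : ℝ => f (Real.exp x) * Real.exp (-(x - ((z - S/2) + m))^2 / (2*(S+T))))
        = fun x : ℝ => f (Real.exp x) * Real.exp (-(x - (z + m + T/2) + (S+T)/2)^2 / (2*(S+T))) := by
      funext x; ring_nf
    rw [h3]

/-- Theorem 1 (increasing payoff): the discrete-time value of a European mirror option,
defined by the backward recursion with holder maximization over mirror/no-mirror, is
`q*₊(nε) = ν(x*_{T-nε} + (σ²/2 + |α - σ²/2|)nε, σ²nε)`.  Here `Q n y` is the value with
`n` steps to maturity when the current log mirror underlying is `y`. -/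
theorem mirror_option_value_increasing
    (f : ℝ → ℝ) (hmono : MonotoneOn f (Set.Ioi 0))
    (hint : ∀ z s : ℝ, 0 < s →
      Integrable (fun x : ℝ => f (Real.exp x) * Real.exp (-(x - z + s/2)^2 / (2*s))))
    (σ r δ ε α : ℝ) (hσ : 0 < σ) (hε : 0 < ε) (hα : α = r - δ)
    (Q : ℕ → ℝ → ℝ)
    (hQ0 : ∀ y, Q 0 y = f (Real.exp y))
    (hQrec : ∀ n y, Q (n+1) y =
      max ((σ * Real.sqrt (2 * Real.pi * ε))⁻¹ *
             ∫ u : ℝ, Q n (y + u) * Real.exp (-(u - α*ε + σ^2*ε/2)^2 / (2*σ^2*ε)))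
          ((σ * Real.sqrt (2 * Real.pi * ε))⁻¹ *
             ∫ u : ℝ, Q n (y - u) * Real.exp (-(u - α*ε + σ^2*ε/2)^2 / (2*σ^2*ε)))) :
    ∀ n : ℕ, ∀ y : ℝ,
      Q n y = nu f (y + (σ^2/2 + |α - σ^2/2|) * (n*ε)) (σ^2 * (n*ε)) := by
  intro n
  induction n with
  | zero =>
      intro y
      simp [hQ0, nu]
  | succ n ih =>
      intro y
      rw [hQrec n y]
      have hT : (0:ℝ) < σ^2*ε := by positivity
      have hS : (0:ℝ) ≤ σ^2*((n:ℝ)*ε) := by positivity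
      have hnorm : σ * Real.sqrt (2*Real.pi*ε) = Real.sqrt (2*Real.pi*(σ^2*ε)) := by
        rw [show 2*Real.pi*(σ^2*ε) = σ^2*(2*Real.pi*ε) from by ring,
          Real.sqrt_mul (sq_nonneg σ), Real.sqrt_sq hσ.le]
      set z : ℝ := y + (σ^2/2 + |α - σ^2/2|) * ((n:ℝ)*ε) with hz
      have hplus : (σ * Real.sqrt (2 * Real.pi * ε))⁻¹ *
            (∫ u : ℝ, Q n (y + u) * Real.exp (-(u - α*ε + σ^2*ε/2)^2 / (2*σ^2*ε)))
          = nu f (z + (α*ε - σ^2*ε/2) + (σ^2*ε)/2) (σ^2*((n:ℝ)*ε) + σ^2*ε) := by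
        rw [hnorm]
        have he : (fun u : ℝ => Q n (y + u) * Real.exp (-(u - α*ε + σ^2*ε/2)^2 / (2*σ^2*ε)))
            = fun u : ℝ => nu f (z + u) (σ^2*((n:ℝ)*ε)) *
                Real.exp (-(u - (α*ε - σ^2*ε/2))^2 / (2*(σ^2*ε))) := by
          funext u
          rw [ih (y+u), hz]
          ring_nf
        rw [he]
        exact nu_step f hint z (α*ε - σ^2*ε/2) _ _ hS hT
      have hminus : (σ * Real.sqrt (2 * Real.pi * ε))⁻¹ *
            (∫ u : ℝ, Q n (y - u) * Real.exp (-(u - α*ε + σ^2*ε/2)^2 / (2*σ^2*ε)))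
          = nu f (z + (-(α*ε - σ^2*ε/2)) + (σ^2*ε)/2) (σ^2*((n:ℝ)*ε) + σ^2*ε) := by
        rw [hnorm]
        set G : ℝ → ℝ := fun v : ℝ => nu f (z + v) (σ^2*((n:ℝ)*ε)) *
            Real.exp (-(v - (-(α*ε - σ^2*ε/2)))^2 / (2*(σ^2*ε))) with hG
        have he : (fun u : ℝ => Q n (y - u) * Real.exp (-(u - α*ε + σ^2*ε/2)^2 / (2*σ^2*ε)))
            = fun u : ℝ => G (-u) := by
          funext u
          simp only [hG]
          rw [ih (y-u), hz]
          ring_nf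
        rw [he, MeasureTheory.integral_neg_eq_self G volume, hG]
        exact nu_step f hint z (-(α*ε - σ^2*ε/2)) _ _ hS hT
      rw [hplus, hminus]
      have hSTpos : (0:ℝ) ≤ σ^2*((n:ℝ)*ε) + σ^2*ε := by positivity
      have hfinS : σ^2*((n:ℝ)*ε) + σ^2*ε = σ^2 * (((n:ℕ)+1 : ℕ) * ε) := by
        push_cast; ring
      rcases le_total 0 (α*ε - σ^2*ε/2) with hm | hm
      · rw [max_eq_left (nu_mono f hmono hint hSTpos (by linarith))]
        have harg : z + (α*ε - σ^2*ε/2) + (σ^2*ε)/2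
            = y + (σ^2/2 + |α - σ^2/2|) * ((((n:ℕ)+1 : ℕ):ℝ) * ε) := by
          have habs : |α - σ^2/2| * ε = α*ε - σ^2*ε/2 := by
            rw [abs_of_nonneg (by nlinarith : (0:ℝ) ≤ α - σ^2/2)]
            ring
          rw [hz]
          push_cast
          linear_combination -habs
        rw [harg, hfinS]
      · rw [max_eq_right (nu_mono f hmono hint hSTpos (by linarith))]
        have harg : z + (-(α*ε - σ^2*ε/2)) + (σ^2*ε)/2
            = y + (σ^2/2 + |α - σ^2/2|) * ((((n:ℕ)+1 : ℕ):ℝ) * ε) := by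
          have habs : |α - σ^2/2| * ε = -(α*ε - σ^2*ε/2) := by
            rw [abs_of_nonpos (by nlinarith : α - σ^2/2 ≤ 0)]
            ring
          rw [hz]
          push_cast
          linear_combination -habs
        rw [harg, hfinS]
end

section
/- Discrete-time valuation with monotone decreasing payoff: under the same backward recursion with holder maximization, q*₋(nε) = ν( x*_{T-nε} + (σ²/2 - |α - σ²/2|)·nε , σ²·nε ) for all n ≥ 0. -/
open MeasureTheory

open Real

lemma sq_split {s v : ℝ} (hs : 0 < s) (hv : 0 < v) (a μ u : ℝ) :
    Real.exp (-(a - u)^2 / (2*s)) * Real.exp (-(u - μ)^2 / (2*v)) =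
    Real.exp (-(a - μ)^2 / (2*(s+v))) *
      Real.exp (-((s+v)/(2*s*v)) * (u - (v*a + s*μ)/(s+v))^2) := by
  rw [← Real.exp_add, ← Real.exp_add]
  congr 1
  have h1 : s ≠ 0 := hs.ne'
  have h2 : v ≠ 0 := hv.ne'
  have h3 : s + v ≠ 0 := by positivity
  field_simp
  ring

lemma gauss_shift (b m : ℝ) :
    ∫ u : ℝ, Real.exp (-b * (u - m)^2) = Real.sqrt (π / b) := by
  have h := MeasureTheory.integral_add_right_eq_self (μ := volume)
    (fun u : ℝ => Real.exp (-b * u^2)) (-m)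
  simp only [← sub_eq_add_neg] at h
  rw [h, integral_gaussian]

lemma gauss_conv {s v : ℝ} (hs : 0 < s) (hv : 0 < v) (a μ : ℝ) :
    ∫ u : ℝ, Real.exp (-(a - u)^2 / (2*s)) * Real.exp (-(u - μ)^2 / (2*v)) =
    Real.sqrt (2*π*(s*v/(s+v))) * Real.exp (-(a - μ)^2 / (2*(s+v))) := by
  simp_rw [sq_split hs hv a μ]
  rw [integral_const_mul, gauss_shift, mul_comm]
  congr 2
  field_simp

set_option maxHeartbeats 1000000 in
lemma nu_conv (f : ℝ → ℝ)
    (hint : ∀ z s : ℝ, 0 < s →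
      Integrable (fun x : ℝ => f (Real.exp x) * Real.exp (-(x - z + s/2)^2 / (2*s))))
    {v : ℝ} (hv : 0 < v) {s : ℝ} (hs : 0 ≤ s) (z μ : ℝ) :
    (Real.sqrt (2*π*v))⁻¹ * ∫ u : ℝ, nu f (z + u) s * Real.exp (-(u - μ)^2 / (2*v)) =
    nu f (z + μ + v/2) (s + v) := by
  have hf : AEStronglyMeasurable (fun x : ℝ => f (Real.exp x)) volume := by
    have h := (hint 0 1 one_pos).aestronglyMeasurable
    have he : (fun x : ℝ => f (Real.exp x)) =
        fun x => (f (Real.exp x) * Real.exp (-(x - 0 + 1/2)^2 / (2*1))) *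
          Real.exp (-(-(x - 0 + 1/2)^2 / (2*1))) := by
      funext x
      rw [mul_assoc, ← Real.exp_add]
      simp
    rw [he]
    exact h.mul ((Real.continuous_exp.comp (by continuity)).aestronglyMeasurable)
  have nu0 : ∀ w, nu f w 0 = f (Real.exp w) := fun w => by simp [nu]
  have nup : ∀ (t : ℝ), t ≠ 0 → ∀ w, nu f w t = (Real.sqrt (2*π*t))⁻¹ *
      ∫ x : ℝ, f (Real.exp x) * Real.exp (-(x - w + t/2)^2 / (2*t)) :=
    fun t ht w => by simp [nu, ht]
  rcases hs.eq_or_lt with h0 | hs'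
  · -- s = 0 case
    subst h0
    rw [zero_add]
    simp only [nu0]
    rw [nup v hv.ne']
    congr 1
    rw [← MeasureTheory.integral_add_right_eq_self (μ := volume)
      (fun x : ℝ => f (Real.exp x) * Real.exp (-(x - (z + μ + v/2) + v/2)^2 / (2*v))) z]
    congr 1
    funext u
    rw [add_comm u z]
    have h1 : z + u - (z + μ + v/2) + v/2 = u - μ := by ring
    rw [h1]
  · -- s > 0 case
    have hsv : 0 < s + v := by linarith
    simp only [nup s hs'.ne']
    rw [nup (s+v) hsv.ne']
    -- uncurried integrand
    set F : ℝ → ℝ → ℝ := fun x u =>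
      f (Real.exp x) * Real.exp (-(x - (z + u) + s/2)^2 / (2*s)) *
        Real.exp (-(u - μ)^2 / (2*v)) with hF
    have harg : ∀ x u : ℝ, x - (z + u) + s/2 = (x - z + s/2) - u := by intros; ring
    have hFsplit : ∀ x u : ℝ, F x u =
        (f (Real.exp x) * Real.exp (-((x - z + s/2) - μ)^2 / (2*(s+v)))) *
          Real.exp (-((s+v)/(2*s*v)) * (u - (v*(x - z + s/2) + s*μ)/(s+v))^2) := by
      intro x u
      rw [hF]
      simp only [harg x u]
      rw [mul_assoc, sq_split hs' hv, ← mul_assoc]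
    have hb : 0 < (s+v)/(2*s*v) := by positivity
    have hFint : Integrable (Function.uncurry F) (volume.prod volume) := by
      have hmeas : AEStronglyMeasurable (Function.uncurry F) (volume.prod volume) := by
        apply AEStronglyMeasurable.mul
        apply AEStronglyMeasurable.mul
        · exact hf.comp_quasiMeasurePreserving Measure.quasiMeasurePreserving_fst
        · exact (Real.continuous_exp.comp (by continuity)).aestronglyMeasurable
        · exact (Real.continuous_exp.comp (by continuity)).aestronglyMeasurable
      rw [integrable_prod_iff hmeas]
      constructor
      · refine Filter.Eventually.of_forall (fun x => ?_)
        simp only [Function.uncurry_apply_pair]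
        have : (fun u => F x u) = fun u =>
            (f (Real.exp x) * Real.exp (-((x - z + s/2) - μ)^2 / (2*(s+v)))) *
              Real.exp (-((s+v)/(2*s*v)) * (u - (v*(x - z + s/2) + s*μ)/(s+v))^2) := by
          funext u; exact hFsplit x u
        rw [this]
        exact (((integrable_exp_neg_mul_sq hb).comp_sub_right _).const_mul _)
      · have heq : (fun x => ∫ u, ‖F x u‖) = fun x =>
            Real.sqrt (π / ((s+v)/(2*s*v))) *
              ‖f (Real.exp x) * Real.exp (-(x - (z + μ + v/2) + (s+v)/2)^2 / (2*(s+v)))‖ := by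
          funext x
          have h2 : ∀ u : ℝ, ‖F x u‖ =
              ‖f (Real.exp x) * Real.exp (-((x - z + s/2) - μ)^2 / (2*(s+v)))‖ *
                Real.exp (-((s+v)/(2*s*v)) * (u - (v*(x - z + s/2) + s*μ)/(s+v))^2) := by
            intro u
            rw [hFsplit x u, norm_mul, Real.norm_of_nonneg (Real.exp_pos _).le]
          simp_rw [h2]
          rw [integral_const_mul, gauss_shift, mul_comm]
          congr 2
          ring
        simp only [Function.uncurry_apply_pair]
        rw [heq]
        refine Integrable.const_mul ?_ _
        exact (hint (z + μ + v/2) (s+v) hsv).norm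
    -- now the computation
    have step1 : ∀ u : ℝ, ((Real.sqrt (2*π*s))⁻¹ *
        ∫ x : ℝ, f (Real.exp x) * Real.exp (-(x - (z+u) + s/2)^2/(2*s))) *
          Real.exp (-(u-μ)^2/(2*v)) = (Real.sqrt (2*π*s))⁻¹ * ∫ x : ℝ, F x u := by
      intro u
      rw [mul_assoc, ← MeasureTheory.integral_mul_const]
    simp_rw [step1]
    rw [MeasureTheory.integral_const_mul, ← MeasureTheory.integral_integral_swap hFint]
    have hinner : ∀ x : ℝ, (∫ u : ℝ, F x u) =
        (f (Real.exp x) * Real.exp (-(x - (z + μ + v/2) + (s+v)/2)^2 / (2*(s+v)))) *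
          Real.sqrt (π/((s+v)/(2*s*v))) := by
      intro x
      simp_rw [hFsplit x]
      rw [MeasureTheory.integral_const_mul, gauss_shift,
        show (x - z + s/2) - μ = x - (z + μ + v/2) + (s+v)/2 from by ring]
    simp_rw [hinner]
    rw [MeasureTheory.integral_mul_const]
    have hre : (Real.sqrt (2*π*v))⁻¹ * ((Real.sqrt (2*π*s))⁻¹ *
        ((∫ x : ℝ, f (Real.exp x) * Real.exp (-(x - (z + μ + v/2) + (s+v)/2)^2 / (2*(s+v)))) *
          Real.sqrt (π/((s+v)/(2*s*v))))) =
        ((Real.sqrt (2*π*v))⁻¹ * (Real.sqrt (2*π*s))⁻¹ * Real.sqrt (π/((s+v)/(2*s*v)))) *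
          (∫ x : ℝ, f (Real.exp x) * Real.exp (-(x - (z + μ + v/2) + (s+v)/2)^2 / (2*(s+v)))) := by
      ring
    rw [hre]
    congr 1
    rw [← mul_inv, ← Real.sqrt_mul (by positivity : (0:ℝ) ≤ 2*π*v), ← Real.sqrt_inv,
      ← Real.sqrt_mul (by positivity), ← Real.sqrt_inv]
    congr 1
    field_simp

lemma nu_anti (f : ℝ → ℝ) (hmono : AntitoneOn f (Set.Ioi 0))
    (hint : ∀ z s : ℝ, 0 < s →
      Integrable (fun x : ℝ => f (Real.exp x) * Real.exp (-(x - z + s/2)^2 / (2*s))))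
    {s : ℝ} (hs : 0 < s) {z₁ z₂ : ℝ} (h : z₁ ≤ z₂) : nu f z₂ s ≤ nu f z₁ s := by
  unfold nu
  rw [if_neg hs.ne', if_neg hs.ne']
  have hc : (0:ℝ) ≤ (Real.sqrt (2*Real.pi*s))⁻¹ := by positivity
  refine mul_le_mul_of_nonneg_left ?_ hc
  have hsub : (∫ x : ℝ, f (Real.exp x) * Real.exp (-(x - z₂ + s/2)^2 / (2*s))) =
      ∫ x : ℝ, f (Real.exp (x + (z₂ - z₁))) * Real.exp (-(x - z₁ + s/2)^2 / (2*s)) := by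
    rw [← MeasureTheory.integral_add_right_eq_self (μ := volume)
      (fun x : ℝ => f (Real.exp x) * Real.exp (-(x - z₂ + s/2)^2 / (2*s))) (z₂ - z₁)]
    congr 1
    funext x
    rw [show x + (z₂ - z₁) - z₂ + s/2 = x - z₁ + s/2 from by ring]
  rw [hsub]
  refine integral_mono ?_ (hint z₁ s hs) ?_
  · have := (hint z₂ s hs).comp_add_right (z₂ - z₁)
    refine this.congr (Filter.Eventually.of_forall fun x => ?_)
    simp only [show ∀ t : ℝ, t + (z₂ - z₁) - z₂ + s/2 = t - z₁ + s/2 from fun t => by ring]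
  · intro x
    have h1 : Real.exp x ≤ Real.exp (x + (z₂ - z₁)) := Real.exp_le_exp.2 (by linarith)
    exact mul_le_mul_of_nonneg_right
      (hmono (Real.exp_pos x) (Real.exp_pos _) h1) (Real.exp_pos _).le

set_option maxHeartbeats 1000000 in
/-- Theorem 1 (decreasing payoff): under the same backward recursion with holder
maximization, `q*₋(nε) = ν(x*_{T-nε} + (σ²/2 - |α - σ²/2|)nε, σ²nε)`. -/
theorem mirror_option_value_decreasing
    (f : ℝ → ℝ) (hmono : AntitoneOn f (Set.Ioi 0))
    (hint : ∀ z s : ℝ, 0 < s →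
      Integrable (fun x : ℝ => f (Real.exp x) * Real.exp (-(x - z + s/2)^2 / (2*s))))
    (σ r δ ε α : ℝ) (hσ : 0 < σ) (hε : 0 < ε) (hα : α = r - δ)
    (Q : ℕ → ℝ → ℝ)
    (hQ0 : ∀ y, Q 0 y = f (Real.exp y))
    (hQrec : ∀ n y, Q (n+1) y =
      max ((σ * Real.sqrt (2 * Real.pi * ε))⁻¹ *
             ∫ u : ℝ, Q n (y + u) * Real.exp (-(u - α*ε + σ^2*ε/2)^2 / (2*σ^2*ε)))
          ((σ * Real.sqrt (2 * Real.pi * ε))⁻¹ *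
             ∫ u : ℝ, Q n (y - u) * Real.exp (-(u - α*ε + σ^2*ε/2)^2 / (2*σ^2*ε)))) :
    ∀ n : ℕ, ∀ y : ℝ,
      Q n y = nu f (y + (σ^2/2 - |α - σ^2/2|) * (n*ε)) (σ^2 * (n*ε)) := by
  intro n
  induction n with
  | zero => intro y; simp [hQ0, nu]
  | succ n ih =>
    intro y
    rw [hQrec n y]
    have hv : 0 < σ^2*ε := by positivity
    have hs : 0 ≤ σ^2*((n:ℝ)*ε) := by positivity
    set c : ℝ := σ^2/2 - |α - σ^2/2| with hcdef
    set Z : ℝ := y + c*((n:ℝ)*ε) with hZdef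
    have hconst : (σ * Real.sqrt (2*Real.pi*ε))⁻¹ = (Real.sqrt (2*Real.pi*(σ^2*ε)))⁻¹ := by
      congr 1
      rw [show (2*Real.pi*(σ^2*ε) : ℝ) = σ^2 * (2*Real.pi*ε) from by ring,
        Real.sqrt_mul (by positivity : (0:ℝ) ≤ σ^2) (2*Real.pi*ε), Real.sqrt_sq hσ.le]
    have hkern : ∀ u : ℝ, Real.exp (-(u - α*ε + σ^2*ε/2)^2 / (2*σ^2*ε)) =
        Real.exp (-(u - (α*ε - σ^2*ε/2))^2 / (2*(σ^2*ε))) := by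
      intro u; rw [show u - α*ε + σ^2*ε/2 = u - (α*ε - σ^2*ε/2) from by ring,
        show (2*σ^2*ε : ℝ) = 2*(σ^2*ε) from by ring]
    have hQ1 : ∀ u : ℝ, Q n (y + u) = nu f (Z + u) (σ^2*((n:ℝ)*ε)) := by
      intro u; rw [ih (y+u)]; congr 1; rw [hZdef]; ring
    have hQ2 : ∀ u : ℝ, Q n (y - u) = nu f (Z + (-u)) (σ^2*((n:ℝ)*ε)) := by
      intro u; rw [ih (y-u)]; congr 1; rw [hZdef]; ring
    simp_rw [hconst, hkern, hQ1, hQ2]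
    have hmirror : (∫ u : ℝ, nu f (Z + (-u)) (σ^2*((n:ℝ)*ε)) *
          Real.exp (-(u - (α*ε - σ^2*ε/2))^2 / (2*(σ^2*ε)))) =
        ∫ u : ℝ, nu f (Z + u) (σ^2*((n:ℝ)*ε)) *
          Real.exp (-(u - (σ^2*ε/2 - α*ε))^2 / (2*(σ^2*ε))) := by
      rw [← MeasureTheory.integral_neg_eq_self
        (fun u : ℝ => nu f (Z + u) (σ^2*((n:ℝ)*ε)) *
          Real.exp (-(u - (σ^2*ε/2 - α*ε))^2 / (2*(σ^2*ε)))) volume]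
      congr 1
      funext u
      rw [show -u - (σ^2*ε/2 - α*ε) = -(u - (α*ε - σ^2*ε/2)) from by ring, neg_sq]
    rw [hmirror, nu_conv f hint hv hs Z (α*ε - σ^2*ε/2),
      nu_conv f hint hv hs Z (σ^2*ε/2 - α*ε)]
    have hS : 0 < σ^2*((n:ℝ)*ε) + σ^2*ε := by positivity
    have hcast : ((n+1 : ℕ) : ℝ) = (n : ℝ) + 1 := by push_cast; ring
    rcases le_total α (σ^2/2) with hc1 | hc1
    · have habs : c = α := by rw [hcdef, abs_of_nonpos (by linarith)]; ring
      have hmul : α*ε ≤ σ^2/2*ε := mul_le_mul_of_nonneg_right hc1 hε.le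
      have hle : nu f (Z + (σ^2*ε/2 - α*ε) + (σ^2*ε)/2) (σ^2*((n:ℝ)*ε) + σ^2*ε) ≤
          nu f (Z + (α*ε - σ^2*ε/2) + (σ^2*ε)/2) (σ^2*((n:ℝ)*ε) + σ^2*ε) :=
        nu_anti f hmono hint hS (by linarith)
      rw [max_eq_left hle]
      congr 1
      · rw [hZdef, habs, hcast]; ring
      · rw [hcast]; ring
    · have habs : c = σ^2 - α := by rw [hcdef, abs_of_nonneg (by linarith)]; ring
      have hmul : σ^2/2*ε ≤ α*ε := mul_le_mul_of_nonneg_right hc1 hε.le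
      have hle : nu f (Z + (α*ε - σ^2*ε/2) + (σ^2*ε)/2) (σ^2*((n:ℝ)*ε) + σ^2*ε) ≤
          nu f (Z + (σ^2*ε/2 - α*ε) + (σ^2*ε)/2) (σ^2*((n:ℝ)*ε) + σ^2*ε) :=
        nu_anti f hmono hint hS (by linarith)
      rw [max_eq_right hle]
      congr 1
      · rw [hZdef, habs, hcast]; ring
      · rw [hcast]; ring
end
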